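/- For every n ≥ 1, the Krasnosel'skii–Mann iterates satisfy √(π · Σ_{i=1}^n α_i(1−α_i)) · ‖x_n − T x_n‖ ≤ diam(C). Equivalently, ‖x_n − T x_n‖ ≤ diam(C) / √(π Σ_{i=1}^n α_i(1−α_i)) whenever Σ_{i=1}^n α_i(1−α_i) > 0. -/

import Mathlib

open Finset

noncomputable section

namespace KMCSV

abbrev A := AddMonoidAlgebra ℝ ℤ

/-- discrete sign function -/
def sg (z : ℤ) : ℝ := if 0 < z then 1 else if z < 0 then -1 else 0

def coinP (a : ℝ) : A := AddMonoidAlgebra.single 0 (1 - a) + AddMonoidAlgebra.single 1 a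
def coinM (a : ℝ) : A := AddMonoidAlgebra.single 0 (1 - a) + AddMonoidAlgebra.single (-1) a
def tau (a : ℝ) : ℝ := a * (1 - a)
def ker (a : ℝ) : A := coinP a * coinM a

/-- weighted sum functional -/
instance : CoeFun A (fun _ => ℤ → ℝ) := ⟨fun h => h.coeff⟩

def Lw (g : ℤ → ℝ) (h : A) : ℝ := h.coeff.sum fun z c => g z * c

lemma Lw_zero (g : ℤ → ℝ) : Lw g 0 = 0 := by
  rw [Lw, AddMonoidAlgebra.coeff_zero]; exact Finsupp.sum_zero_index

lemma Lw_add (g : ℤ → ℝ) (h₁ h₂ : A) : Lw g (h₁ + h₂) = Lw g h₁ + Lw g h₂ :=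
  by rw [Lw, Lw, Lw, AddMonoidAlgebra.coeff_add]; exact Finsupp.sum_add_index' (fun a => by simp) (fun a b₁ b₂ => by ring)

lemma Lw_single (g : ℤ → ℝ) (w : ℤ) (c : ℝ) :
    Lw g (AddMonoidAlgebra.single w c) = g w * c :=
  by rw [Lw, AddMonoidAlgebra.coeff_single]; exact Finsupp.sum_single_index (by simp)

lemma Lw_single_mul (g : ℤ → ℝ) (w : ℤ) (c : ℝ) (h : A) :
    Lw g (AddMonoidAlgebra.single w c * h) = c * Lw (fun z => g (z + w)) h := by
  induction h using AddMonoidAlgebra.induction_linear with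
  | zero => simp [Lw_zero]
  | add f g' hf hg' => rw [mul_add, Lw_add, hf, hg', Lw_add, mul_add]
  | single b d =>
      rw [AddMonoidAlgebra.single_mul_single, Lw_single, Lw_single, add_comm b w]
      ring

lemma Lw_coinP_mul (g : ℤ → ℝ) (a : ℝ) (h : A) :
    Lw g (coinP a * h) = (1 - a) * Lw g h + a * Lw (fun z => g (z + 1)) h := by
  rw [coinP, add_mul, Lw_add, Lw_single_mul, Lw_single_mul]
  simp

lemma Lw_coinM_mul (g : ℤ → ℝ) (a : ℝ) (h : A) :
    Lw g (coinM a * h) = (1 - a) * Lw g h + a * Lw (fun z => g (z - 1)) h := by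
  rw [coinM, add_mul, Lw_add, Lw_single_mul, Lw_single_mul]
  simp [sub_eq_add_neg]

lemma Lw_one (g : ℤ → ℝ) : Lw g 1 = g 0 := by
  rw [AddMonoidAlgebra.one_def, Lw_single, mul_one]

/-- mass (augmentation) is multiplicative -/
lemma mass_mul (h₁ h₂ : A) :
    Lw (fun _ => 1) (h₁ * h₂) = Lw (fun _ => 1) h₁ * Lw (fun _ => 1) h₂ := by
  induction h₁ using AddMonoidAlgebra.induction_linear with
  | zero => simp [Lw_zero]
  | add f g' hf hg' => rw [add_mul, Lw_add, hf, hg', Lw_add, add_mul]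
  | single b d => rw [Lw_single_mul, Lw_single]; ring

lemma mass_coinP (a : ℝ) : Lw (fun _ => 1) (coinP a) = 1 := by
  rw [coinP, Lw_add, Lw_single, Lw_single]; ring

/-- pointwise formula for multiplication by coins -/
lemma coinP_mul_apply (a : ℝ) (h : A) (z : ℤ) :
    (coinP a * h) z = (1 - a) * h z + a * h (z - 1) := by
  rw [coinP, add_mul]
  rw [AddMonoidAlgebra.coeff_add, Finsupp.add_apply]
  rw [AddMonoidAlgebra.coeff_single_mul_apply, AddMonoidAlgebra.coeff_single_mul_apply]
  have h1 : (-0 : ℤ) + z = z := by ring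
  have h2 : (-1 : ℤ) + z = z - 1 := by ring
  rw [h1, h2]

lemma coinM_mul_apply (a : ℝ) (h : A) (z : ℤ) :
    (coinM a * h) z = (1 - a) * h z + a * h (z + 1) := by
  rw [coinM, add_mul, AddMonoidAlgebra.coeff_add, Finsupp.add_apply,
    AddMonoidAlgebra.coeff_single_mul_apply, AddMonoidAlgebra.coeff_single_mul_apply]
  have h1 : (-0 : ℤ) + z = z := by ring
  have h2 : (- -1 : ℤ) + z = z + 1 := by ring
  rw [h1, h2]

lemma ker_mul_apply (a : ℝ) (h : A) (z : ℤ) :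
    (ker a * h) z = tau a * h (z - 1) + (1 - 2 * tau a) * h z + tau a * h (z + 1) := by
  rw [ker, mul_assoc, coinP_mul_apply, coinM_mul_apply, coinM_mul_apply]
  have : z - 1 + 1 = z := by ring
  rw [this, tau]
  ring


variable (α : ℕ → ℝ)

def Dm (m : ℕ) : A := ∏ i ∈ Icc 1 m, ker (α i)
def Rr (m n : ℕ) : A := ∏ j ∈ Icc (m + 1) n, coinP (α j)
def ff (m n : ℕ) : A := Dm α m * Rr α m n
def Q (m n : ℕ) : ℝ := Lw (fun z => sg (z + 1)) (ff α m n)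
def P (m n : ℕ) : ℝ := Lw sg (ff α m n)

lemma Dm_succ (m : ℕ) : Dm α (m + 1) = Dm α m * ker (α (m + 1)) := by
  rw [Dm, Dm, Finset.prod_Icc_succ_top (Nat.le_add_left 1 m)]

lemma Rr_succ (m n : ℕ) (h : m + 1 ≤ n + 1) :
    Rr α m (n + 1) = Rr α m n * coinP (α (n + 1)) := by
  rw [Rr, Rr, Finset.prod_Icc_succ_top h]

lemma Rr_diag (m : ℕ) : Rr α m m = 1 := by
  rw [Rr]
  rw [show Icc (m+1) m = ∅ from Finset.Icc_eq_empty (by omega)]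
  exact Finset.prod_empty

lemma Rr_split (m n : ℕ) (h : m + 1 ≤ n) :
    Rr α m n = coinP (α (m + 1)) * Rr α (m + 1) n := by
  rw [Rr, Rr, show Icc (m+1+1) n = Ioc (m+1) n from Finset.Icc_add_one_left_eq_Ioc _ _]
  have h2 := Finset.prod_insert (s := Ioc (m+1) n) (f := fun j => coinP (α j))
    (Finset.left_notMem_Ioc (a := m+1) (b := n))
  rw [Finset.Ioc_insert_left h] at h2
  simpa using h2

lemma Lw_congr {g₁ g₂ : ℤ → ℝ} (h : A) (hg : ∀ z, g₁ z = g₂ z) : Lw g₁ h = Lw g₂ h := by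
  rw [show g₁ = g₂ from funext hg]

lemma Dm_zero : Dm α 0 = 1 := by
  rw [Dm, show Icc 1 0 = (∅ : Finset ℕ) from Finset.Icc_eq_empty (by omega), Finset.prod_empty]

lemma ff_succ_left (m n : ℕ) (h : m + 1 ≤ n) :
    ff α (m + 1) n = coinM (α (m + 1)) * ff α m n := by
  rw [ff, ff, Dm_succ, Rr_split α m n h, ker]
  ring

lemma ff_succ_right (m n : ℕ) (h : m + 1 ≤ n + 1) :
    ff α m (n + 1) = coinP (α (n + 1)) * ff α m n := by
  rw [ff, ff, Rr_succ α m n h]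
  ring

lemma Q_rec (m n : ℕ) (h : m + 1 ≤ n) :
    Q α (m + 1) n = (1 - α (m + 1)) * Q α m n + α (m + 1) * P α m n := by
  rw [Q, ff_succ_left α m n h, Lw_coinM_mul, Q, P]
  congr 1
  congr 1
  apply Lw_congr
  intro z
  show sg (z - 1 + 1) = sg z
  congr 1
  ring

lemma P_rec (m n : ℕ) (h : m ≤ n) :
    P α m (n + 1) = (1 - α (n + 1)) * P α m n + α (n + 1) * Q α m n := by
  rw [P, ff_succ_right α m n (by omega), Lw_coinP_mul, P, Q]

lemma Rr_supp (m n : ℕ) : ∀ z : ℤ, z < 0 → Rr α m n z = 0 := by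
  rw [Rr]
  refine Finset.prod_induction _ (fun h : A => ∀ z : ℤ, z < 0 → h z = 0) ?_ ?_ ?_
  · intro h₁ h₂ ih₁ ih₂ z hz
    by_contra hne
    have hz' := AddMonoidAlgebra.support_coeff_mul_subset h₁ h₂ (Finsupp.mem_support_iff.mpr hne)
    rw [Finset.mem_add] at hz'
    obtain ⟨z₁, hz₁, z₂, hz₂, rfl⟩ := hz'
    have h1 : 0 ≤ z₁ := by
      by_contra hlt; exact (Finsupp.mem_support_iff.mp hz₁) (ih₁ z₁ (by omega))
    have h2 : 0 ≤ z₂ := by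
      by_contra hlt; exact (Finsupp.mem_support_iff.mp hz₂) (ih₂ z₂ (by omega))
    omega
  · intro z hz
    rw [AddMonoidAlgebra.one_def, AddMonoidAlgebra.coeff_single, Finsupp.single_apply, if_neg (by omega)]
  · intro j _ z hz
    rw [coinP, AddMonoidAlgebra.coeff_add, Finsupp.add_apply, AddMonoidAlgebra.coeff_single,
      AddMonoidAlgebra.coeff_single, Finsupp.single_apply, Finsupp.single_apply,
      if_neg (by omega), if_neg (by omega), add_zero]

lemma mass_Rr (m n : ℕ) : Lw (fun _ => 1) (Rr α m n) = 1 := by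
  rw [Rr]
  refine Finset.prod_induction _ (fun h => Lw (fun _ => 1) h = 1) ?_ ?_ ?_
  · intro h₁ h₂ ih₁ ih₂
    rw [mass_mul, ih₁, ih₂, one_mul]
  · exact Lw_one _
  · intro j _; exact mass_coinP _

lemma Q_zero (n : ℕ) : Q α 0 n = 1 := by
  have key : Lw (fun z => sg (z + 1)) (Rr α 0 n) = Lw (fun _ => 1) (Rr α 0 n) := by
    apply Finsupp.sum_congr
    intro z hz
    have h0 : 0 ≤ z := by
      by_contra hlt
      exact (Finsupp.mem_support_iff.mp hz) (Rr_supp α 0 n z (by omega))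
    show sg (z + 1) * _ = 1 * _
    rw [sg, if_pos (by omega)]
  rw [Q, ff, Dm_zero, one_mul, key, mass_Rr]

lemma Dm_symm (m : ℕ) : ∀ z : ℤ, Dm α m (-z) = Dm α m z := by
  induction m with
  | zero =>
      intro z
      rw [Dm_zero, AddMonoidAlgebra.one_def, AddMonoidAlgebra.coeff_single, Finsupp.single_apply,
          Finsupp.single_apply]
      simp [eq_comm, neg_eq_zero]
  | succ m ih =>
      intro z
      rw [Dm_succ, mul_comm, ker_mul_apply, ker_mul_apply]
      rw [show -z - 1 = -(z + 1) by ring, show -z + 1 = -(z - 1) by ring, ih, ih, ih]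
      ring

lemma Lw_odd (g : ℤ → ℝ) (hodd : ∀ z, g (-z) = - g z) (h : A) (hsymm : ∀ z, h (-z) = h z) :
    Lw g h = 0 := by
  rw [Lw, Finsupp.sum]
  apply Finset.sum_involution (fun z _ => -z)
  · intro z hz
    rw [hodd, hsymm]; ring
  · intro z hz hne heq
    apply hne
    have hz0 : z = 0 := by omega
    have hg0 : g 0 = 0 := by have := hodd 0; simp at this; linarith
    rw [hz0, hg0, zero_mul]
  · intro z hz; omega
  · intro z hz
    exact Finsupp.mem_support_iff.mpr (by rw [hsymm]; exact Finsupp.mem_support_iff.mp hz)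

lemma P_diag (m : ℕ) : P α m m = 0 := by
  rw [P, ff, Rr_diag, mul_one]
  refine Lw_odd _ ?_ _ (Dm_symm α m)
  intro z
  rw [sg, sg]
  split_ifs <;> first | (exfalso; omega) | norm_num

lemma Lw_wadd (g₁ g₂ : ℤ → ℝ) (h : A) :
    Lw (fun z => g₁ z + g₂ z) h = Lw g₁ h + Lw g₂ h := by
  rw [Lw, Lw, Lw, Finsupp.sum, Finsupp.sum, Finsupp.sum, ← Finset.sum_add_distrib]
  apply Finset.sum_congr rfl
  intro z _; ring

lemma Lw_delta (b : ℤ) (h : A) : Lw (fun z => if z = b then 1 else 0) h = h b := by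
  rw [Lw, Finsupp.sum]
  have hc : ∀ z ∈ h.coeff.support, (if z = b then (1:ℝ) else 0) * h z = if z = b then h z else 0 :=
    fun z _ => by split_ifs <;> simp
  rw [Finset.sum_congr rfl hc, Finset.sum_ite_eq' h.coeff.support b (fun z => h z)]
  split_ifs with hb
  · rfl
  · exact (Finsupp.notMem_support_iff.mp hb).symm

def wodd (z : ℤ) : ℝ := if 2 ≤ z then 1 else if z ≤ -2 then -1 else 0

lemma Q_diag (n : ℕ) : Q α n n = Dm α n 0 + Dm α n 1 := by
  rw [Q, ff, Rr_diag, mul_one]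
  have hdecomp : ∀ z : ℤ, sg (z + 1) =
      wodd z + ((if z = 0 then (1:ℝ) else 0) + (if z = 1 then (1:ℝ) else 0)) := by
    intro z
    rw [sg, wodd]
    split_ifs <;> first | (exfalso; omega) | norm_num
  rw [Lw_congr _ hdecomp, Lw_wadd, Lw_wadd, Lw_delta, Lw_delta]
  rw [Lw_odd wodd ?_ _ (Dm_symm α n), zero_add]
  intro z
  rw [wodd, wodd]
  split_ifs <;> first | (exfalso; omega) | norm_num


section KM

variable {X : Type*} [NormedAddCommGroup X] [NormedSpace ℝ X]

lemma combo1 (a : ℝ) (u v w : X) :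
    ((1-a) • u + a • v) - w = (1-a) • (u - w) + a • (v - w) := by
  have hw : (1-a) • w + a • w = w := by rw [← add_smul]; simp
  calc ((1-a) • u + a • v) - w = ((1-a) • u + a • v) - ((1-a) • w + a • w) := by rw [hw]
  _ = (1-a) • (u - w) + a • (v - w) := by rw [smul_sub, smul_sub]; abel

lemma combo2 (a : ℝ) (u v w : X) :
    w - ((1-a) • u + a • v) = (1-a) • (w - u) + a • (w - v) := by
  have hw : (1-a) • w + a • w = w := by rw [← add_smul]; simp
  calc w - ((1-a) • u + a • v) = ((1-a) • w + a • w) - ((1-a) • u + a • v) := by rw [hw]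
  _ = (1-a) • (w - u) + a • (w - v) := by rw [smul_sub, smul_sub]; abel

lemma norm_combo_le (a : ℝ) (h0 : 0 ≤ a) (h1 : a ≤ 1) (p q : X) :
    ‖(1-a) • p + a • q‖ ≤ (1-a) * ‖p‖ + a * ‖q‖ := by
  refine le_trans (norm_add_le _ _) ?_
  rw [norm_smul, norm_smul, Real.norm_eq_abs, Real.norm_eq_abs,
    abs_of_nonneg (by linarith), abs_of_nonneg h0]

variable (C : Set X) (hCconv : Convex ℝ C)
  (hCbdd : Bornology.IsBounded C)
  (T : X → X) (hTmaps : Set.MapsTo T C C)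
  (hT : ∀ x ∈ C, ∀ y ∈ C, ‖T x - T y‖ ≤ ‖x - y‖)
  (α : ℕ → ℝ) (hα : ∀ k, α k ∈ Set.Icc (0:ℝ) 1)
  (x : ℕ → X) (hx0 : x 0 ∈ C)
  (hx : ∀ k, x (k + 1) = (1 - α (k + 1)) • x k + α (k + 1) • T (x k))

include hCconv hTmaps hx0 hx in
lemma xmem (hα : ∀ k, α k ∈ Set.Icc (0:ℝ) 1) : ∀ k, x k ∈ C := by
  intro k
  induction k with
  | zero => exact hx0
  | succ k ih =>
      rw [hx k]
      exact hCconv ih (hTmaps ih) (by linarith [(hα (k+1)).2]) (hα (k+1)).1 (by ring)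

include hCconv hCbdd hTmaps hT hα hx0 hx in
lemma km_key : ∀ N m n : ℕ, m + n ≤ N → m ≤ n →
    ‖x m - T (x n)‖ ≤ Metric.diam C * Q α m n ∧
    ‖x m - x n‖ ≤ Metric.diam C * P α m n := by
  have hd0 : 0 ≤ Metric.diam C := Metric.diam_nonneg
  have hxc : ∀ k, x k ∈ C := xmem C hCconv T hTmaps α x hx0 hx hα
  intro N
  induction N with
  | zero =>
      intro m n hmn hle
      obtain ⟨rfl, rfl⟩ : m = 0 ∧ n = 0 := by omega
      constructor
      · rw [Q_zero, mul_one, ← dist_eq_norm]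
        exact Metric.dist_le_diam_of_mem hCbdd (hxc 0) (hTmaps (hxc 0))
      · rw [P_diag, mul_zero, sub_self, norm_zero]
  | succ N ihN =>
      intro m n hmn hle
      constructor
      · -- Q part
        match m, hle with
        | 0, _ =>
            rw [Q_zero, mul_one, ← dist_eq_norm]
            exact Metric.dist_le_diam_of_mem hCbdd (hxc 0) (hTmaps (hxc n))
        | (m' + 1), hle =>
            set a := α (m' + 1) with ha
            have ha0 : 0 ≤ a := (hα (m'+1)).1
            have ha1 : a ≤ 1 := (hα (m'+1)).2
            have hIH := ihN m' n (by omega) (by omega)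
            calc ‖x (m' + 1) - T (x n)‖
                = ‖(1-a) • (x m' - T (x n)) + a • (T (x m') - T (x n))‖ := by
                  rw [hx m', combo1]
              _ ≤ (1-a) * ‖x m' - T (x n)‖ + a * ‖T (x m') - T (x n)‖ :=
                  norm_combo_le a ha0 ha1 _ _
              _ ≤ (1-a) * (Metric.diam C * Q α m' n) + a * (Metric.diam C * P α m' n) := by
                  have h2 : ‖T (x m') - T (x n)‖ ≤ ‖x m' - x n‖ :=
                    hT _ (hxc m') _ (hxc n)
                  have h3 : ‖T (x m') - T (x n)‖ ≤ Metric.diam C * P α m' n :=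
                    le_trans h2 hIH.2
                  exact add_le_add
                    (mul_le_mul_of_nonneg_left hIH.1 (by linarith))
                    (mul_le_mul_of_nonneg_left h3 ha0)
              _ = Metric.diam C * ((1-a) * Q α m' n + a * P α m' n) := by ring
              _ = Metric.diam C * Q α (m' + 1) n := by rw [← Q_rec α m' n hle]
      · -- P part
        rcases eq_or_lt_of_le hle with heq | hlt
        · subst heq
          rw [P_diag, mul_zero, sub_self, norm_zero]
        · match n, hlt with
          | (n' + 1), hlt =>
            set a := α (n' + 1) with ha
            have ha0 : 0 ≤ a := (hα (n'+1)).1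
            have ha1 : a ≤ 1 := (hα (n'+1)).2
            have hIH := ihN m n' (by omega) (by omega)
            calc ‖x m - x (n' + 1)‖
                = ‖(1-a) • (x m - x n') + a • (x m - T (x n'))‖ := by
                  rw [hx n', combo2]
              _ ≤ (1-a) * ‖x m - x n'‖ + a * ‖x m - T (x n')‖ :=
                  norm_combo_le a ha0 ha1 _ _
              _ ≤ (1-a) * (Metric.diam C * P α m n') + a * (Metric.diam C * Q α m n') :=
                  add_le_add
                    (mul_le_mul_of_nonneg_left hIH.2 (by linarith))
                    (mul_le_mul_of_nonneg_left hIH.1 ha0)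
              _ = Metric.diam C * ((1-a) * P α m n' + a * Q α m n') := by ring
              _ = Metric.diam C * P α m (n' + 1) := by rw [← P_rec α m n' (by omega)]

end KM


section Integral

open Real MeasureTheory intervalIntegral

def Kn (α : ℕ → ℝ) (n : ℕ) (θ : ℝ) : ℝ :=
  ∏ i ∈ Icc 1 n, (1 - 2 * tau (α i) * (1 - Real.cos θ))

lemma Kn_zero (θ : ℝ) : Kn α 0 θ = 1 := by
  rw [Kn, show Icc 1 0 = (∅ : Finset ℕ) from Finset.Icc_eq_empty (by omega), Finset.prod_empty]

lemma Kn_succ (n : ℕ) (θ : ℝ) :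
    Kn α (n+1) θ = Kn α n θ * (1 - 2 * tau (α (n+1)) * (1 - Real.cos θ)) := by
  rw [Kn, Kn, Finset.prod_Icc_succ_top (Nat.le_add_left 1 n)]

lemma Kn_cont (n : ℕ) : Continuous (fun θ => Kn α n θ) := by
  apply continuous_finset_prod
  intro i _
  fun_prop

lemma cos_int_cont (z : ℤ) : Continuous (fun θ : ℝ => Real.cos ((z : ℝ) * θ)) := by fun_prop

lemma integral_cos_int (z : ℤ) (hz : z ≠ 0) :
    ∫ θ in (0:ℝ)..π, Real.cos ((z:ℝ) * θ) = 0 := by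
  have hc : (z : ℝ) ≠ 0 := Int.cast_ne_zero.mpr hz
  rw [intervalIntegral.integral_comp_mul_left Real.cos hc, mul_zero, integral_cos,
    Real.sin_zero, sub_zero, Real.sin_int_mul_pi, smul_zero]

lemma Dm_rec (n : ℕ) (z : ℤ) :
    Dm α (n+1) z = tau (α (n+1)) * Dm α n (z-1) + (1 - 2 * tau (α (n+1))) * Dm α n z
      + tau (α (n+1)) * Dm α n (z+1) := by
  rw [Dm_succ, mul_comm, ker_mul_apply]

lemma Drep (n : ℕ) : ∀ z : ℤ,
    Dm α n z = (1/π) * ∫ θ in (0:ℝ)..π, Kn α n θ * Real.cos ((z:ℝ) * θ) := by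
  induction n with
  | zero =>
      intro z
      have hKn : (fun θ => Kn α 0 θ * Real.cos ((z:ℝ) * θ))
          = fun θ => Real.cos ((z:ℝ) * θ) := by
        funext θ; rw [Kn_zero, one_mul]
      rw [Dm_zero, AddMonoidAlgebra.one_def, AddMonoidAlgebra.coeff_single, Finsupp.single_apply, hKn]
      rcases eq_or_ne z 0 with rfl | hz
      · simp only [if_pos rfl]
        norm_num
      · rw [if_neg (by omega), integral_cos_int z hz, mul_zero]
  | succ n ih =>
      intro z
      set t := tau (α (n+1)) with ht
      have i1 : IntervalIntegrable (fun θ => Kn α n θ * Real.cos (((z-1 : ℤ):ℝ) * θ))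
          MeasureTheory.volume 0 π := ((Kn_cont α n).mul (cos_int_cont _)).intervalIntegrable _ _
      have i2 : IntervalIntegrable (fun θ => Kn α n θ * Real.cos  (((z : ℤ):ℝ) * θ))
          MeasureTheory.volume 0 π := ((Kn_cont α n).mul (cos_int_cont _)).intervalIntegrable _ _
      have i3 : IntervalIntegrable (fun θ => Kn α n θ * Real.cos (((z+1 : ℤ):ℝ) * θ))
          MeasureTheory.volume 0 π := ((Kn_cont α n).mul (cos_int_cont _)).intervalIntegrable _ _
      have hint : (fun θ => Kn α (n+1) θ * Real.cos ((z:ℝ) * θ))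
          = fun θ => t * (Kn α n θ * Real.cos (((z-1 : ℤ):ℝ) * θ))
            + ((1 - 2*t) * (Kn α n θ * Real.cos (((z : ℤ):ℝ) * θ))
            + t * (Kn α n θ * Real.cos (((z+1 : ℤ):ℝ) * θ))) := by
        funext θ
        rw [Kn_succ]
        push_cast
        rw [sub_mul, add_mul, one_mul, Real.cos_sub, Real.cos_add]
        ring
      rw [Dm_rec, ih, ih, ih, hint]
      rw [intervalIntegral.integral_add ((i1.const_mul t))
        (((i2.const_mul (1-2*t))).add ((i3.const_mul t))),
        intervalIntegral.integral_add ((i2.const_mul (1-2*t))) ((i3.const_mul t)),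
        intervalIntegral.integral_const_mul, intervalIntegral.integral_const_mul,
        intervalIntegral.integral_const_mul]
      push_cast
      ring

lemma Q_diag_integral (n : ℕ) :
    Q α n n = (1/π) * ∫ θ in (0:ℝ)..π, Kn α n θ * (1 + Real.cos θ) := by
  have i0 : IntervalIntegrable (fun θ => Kn α n θ * Real.cos (((0 : ℤ):ℝ) * θ))
      MeasureTheory.volume 0 π := ((Kn_cont α n).mul (cos_int_cont _)).intervalIntegrable _ _
  have i1 : IntervalIntegrable (fun θ => Kn α n θ * Real.cos (((1 : ℤ):ℝ) * θ))
      MeasureTheory.volume 0 π := ((Kn_cont α n).mul (cos_int_cont _)).intervalIntegrable _ _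
  rw [Q_diag, Drep α n 0, Drep α n 1]
  rw [← mul_add, ← intervalIntegral.integral_add i0 i1]
  congr 1
  apply intervalIntegral.integral_congr
  intro θ _
  push_cast
  rw [zero_mul, one_mul, Real.cos_zero]
  ring

end Integral


section Gauss

open Real MeasureTheory intervalIntegral Set

lemma tau_nonneg {a : ℝ} (h : a ∈ Set.Icc (0:ℝ) 1) : 0 ≤ tau a := by
  rw [tau]; nlinarith [h.1, h.2]

lemma tau_le_quarter {a : ℝ} (h : a ∈ Set.Icc (0:ℝ) 1) : tau a ≤ 1/4 := by
  rw [tau]; nlinarith [h.1, h.2, sq_nonneg (a - 1/2)]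

variable (α : ℕ → ℝ)

lemma Kn_nonneg (hα : ∀ k, α k ∈ Set.Icc (0:ℝ) 1) (n : ℕ) (θ : ℝ) : 0 ≤ Kn α n θ := by
  apply Finset.prod_nonneg
  intro i _
  have h1 := tau_nonneg (hα i)
  have h2 := tau_le_quarter (hα i)
  have h3 := Real.cos_le_one θ
  have h4 := Real.neg_one_le_cos θ
  nlinarith

lemma Kn_le_exp (hα : ∀ k, α k ∈ Set.Icc (0:ℝ) 1) (n : ℕ) (θ : ℝ) :
    Kn α n θ ≤ Real.exp (-(2*(1 - Real.cos θ)) * ∑ i ∈ Icc 1 n, tau (α i)) := by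
  have key : Kn α n θ ≤ ∏ i ∈ Icc 1 n, Real.exp (-(2*(1 - Real.cos θ)) * tau (α i)) := by
    rw [Kn]
    apply Finset.prod_le_prod
    · intro i _
      have h1 := tau_nonneg (hα i)
      have h2 := tau_le_quarter (hα i)
      have h3 := Real.cos_le_one θ
      have h4 := Real.neg_one_le_cos θ
      nlinarith
    · intro i _
      have := Real.add_one_le_exp (-(2*(1 - Real.cos θ)) * tau (α i))
      linarith
  rw [Finset.mul_sum, Real.exp_sum] at *
  exact key

lemma gauss_piece (T : ℝ) (hT : 0 < T) :
    ∫ θ in (0:ℝ)..π, Real.exp (-(2*(1 - Real.cos θ)) * T) * (1 + Real.cos θ)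
      ≤ Real.sqrt (π / T) := by
  have h4T : 0 < 4 * T := by linarith
  -- change of variables s = sin (θ/2)
  have hderiv : ∀ θ ∈ Set.uIcc (0:ℝ) π,
      HasDerivAt (fun u : ℝ => Real.sin (u/2)) (Real.cos (θ/2) * (1/2)) θ := by
    intro θ _
    have h1 : HasDerivAt (fun u : ℝ => u/2) (1/2) θ := (hasDerivAt_id θ).div_const 2
    exact (Real.hasDerivAt_sin (θ/2)).comp θ h1
  have hcont : ContinuousOn (fun θ : ℝ => Real.cos (θ/2) * (1/2)) (Set.uIcc 0 π) := by
    fun_prop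
  have hg : Continuous (fun s : ℝ => 4 * Real.exp (-(4*T) * s^2) * Real.sqrt (1 - s^2)) := by
    have : Continuous (fun s : ℝ => Real.sqrt (1 - s^2)) :=
      Real.continuous_sqrt.comp (by fun_prop)
    fun_prop
  have hsub := intervalIntegral.integral_comp_smul_deriv hderiv hcont hg
  have heq : EqOn (fun θ => Real.exp (-(2*(1 - Real.cos θ)) * T) * (1 + Real.cos θ))
      (fun θ => (Real.cos (θ/2) * (1/2)) •
        ((fun s : ℝ => 4 * Real.exp (-(4*T) * s^2) * Real.sqrt (1 - s^2))
          ∘ (fun u : ℝ => Real.sin (u/2))) θ)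
      (Set.uIcc 0 π) := by
    intro θ hθ
    rw [Set.uIcc_of_le Real.pi_nonneg] at hθ
    have hhalf : θ/2 ∈ Set.Icc (-(π/2)) (π/2) := by
      constructor <;> [linarith [hθ.1, Real.pi_nonneg]; linarith [hθ.2]]
    have hcos0 : 0 ≤ Real.cos (θ/2) := Real.cos_nonneg_of_mem_Icc hhalf
    have hcossq : Real.cos (θ/2)^2 = 1/2 + Real.cos θ/2 := by
      rw [Real.cos_sq, show 2*(θ/2) = θ by ring]
    have hsinsq : Real.sin (θ/2)^2 = 1/2 - Real.cos θ/2 := by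
      have := Real.sin_sq_add_cos_sq (θ/2)
      linarith
    show Real.exp (-(2*(1 - Real.cos θ)) * T) * (1 + Real.cos θ)
      = (Real.cos (θ/2) * (1/2)) *
        (4 * Real.exp (-(4*T) * Real.sin (θ/2)^2) * Real.sqrt (1 - Real.sin (θ/2)^2))
    have hroot : Real.sqrt (1 - Real.sin (θ/2)^2) = Real.cos (θ/2) := by
      rw [show (1:ℝ) - Real.sin (θ/2)^2 = Real.cos (θ/2)^2 by nlinarith [Real.sin_sq_add_cos_sq (θ/2)]]
      exact Real.sqrt_sq hcos0
    have hexp : -(4*T) * Real.sin (θ/2)^2 = -(2*(1 - Real.cos θ)) * T := by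
      rw [hsinsq]; ring
    rw [hroot, hexp]
    nlinarith [Real.exp_pos (-(2*(1 - Real.cos θ)) * T), hcossq]
  calc ∫ θ in (0:ℝ)..π, Real.exp (-(2*(1 - Real.cos θ)) * T) * (1 + Real.cos θ)
      = ∫ s in Real.sin (0/2)..Real.sin (π/2),
          4 * Real.exp (-(4*T) * s^2) * Real.sqrt (1 - s^2) := by
        rw [intervalIntegral.integral_congr heq, hsub]
    _ = ∫ s in (0:ℝ)..1, 4 * Real.exp (-(4*T) * s^2) * Real.sqrt (1 - s^2) := by
        norm_num
    _ ≤ ∫ s in (0:ℝ)..1, 4 * Real.exp (-(4*T) * s^2) := by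
        apply intervalIntegral.integral_mono_on zero_le_one
          (by apply Continuous.intervalIntegrable; fun_prop) ?_ ?_
        · apply Continuous.intervalIntegrable; fun_prop
        · intro s hs
          have h1 : Real.sqrt (1 - s^2) ≤ 1 :=
            Real.sqrt_le_one.mpr (by nlinarith [hs.1, hs.2])
          have h2 : 0 < Real.exp (-(4*T) * s^2) := Real.exp_pos _
          nlinarith [Real.sqrt_nonneg (1 - s^2)]
    _ ≤ ∫ s in Set.Ioi (0:ℝ), 4 * Real.exp (-(4*T) * s^2) := by
        rw [intervalIntegral.integral_of_le zero_le_one]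
        apply MeasureTheory.setIntegral_mono_set
        · exact ((integrable_exp_neg_mul_sq h4T).const_mul 4).integrableOn
        · filter_upwards with s
          positivity
        · exact HasSubset.Subset.eventuallyLE Set.Ioc_subset_Ioi_self
    _ = 4 * (Real.sqrt (π / (4*T)) / 2) := by
        rw [MeasureTheory.integral_const_mul, integral_gaussian_Ioi]
    _ = Real.sqrt (π / T) := by
        rw [show π / T = 4 * (π / (4*T)) by field_simp,
          show (4:ℝ) = 2^2 by norm_num, Real.sqrt_mul (by positivity),
          Real.sqrt_sq (by norm_num : (0:ℝ) ≤ 2)]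
        ring

lemma Qnn_le (hα : ∀ k, α k ∈ Set.Icc (0:ℝ) 1) (n : ℕ)
    (hT : 0 < ∑ i ∈ Icc 1 n, tau (α i)) :
    Q α n n ≤ 1 / Real.sqrt (π * ∑ i ∈ Icc 1 n, tau (α i)) := by
  set T := ∑ i ∈ Icc 1 n, tau (α i) with hTdef
  have step1 : Q α n n ≤ (1/π) * Real.sqrt (π / T) := by
    rw [Q_diag_integral]
    have hmono : ∫ θ in (0:ℝ)..π, Kn α n θ * (1 + Real.cos θ)
        ≤ ∫ θ in (0:ℝ)..π, Real.exp (-(2*(1 - Real.cos θ)) * T) * (1 + Real.cos θ) := by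
      apply intervalIntegral.integral_mono_on Real.pi_nonneg
        (by apply Continuous.intervalIntegrable; have := Kn_cont α n; fun_prop) ?_ ?_
      · apply Continuous.intervalIntegrable; fun_prop
      · intro θ _
        have h1 := Kn_le_exp α hα n θ
        have h2 : 0 ≤ 1 + Real.cos θ := by nlinarith [Real.neg_one_le_cos θ]
        exact mul_le_mul_of_nonneg_right h1 h2
    have h3 := gauss_piece T hT
    have hπ : 0 < 1/π := by positivity
    calc (1/π) * ∫ θ in (0:ℝ)..π, Kn α n θ * (1 + Real.cos θ)
        ≤ (1/π) * ∫ θ in (0:ℝ)..π, Real.exp (-(2*(1 - Real.cos θ)) * T) * (1 + Real.cos θ) :=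
          mul_le_mul_of_nonneg_left hmono (le_of_lt hπ)
      _ ≤ (1/π) * Real.sqrt (π / T) := mul_le_mul_of_nonneg_left h3 (le_of_lt hπ)
  have hs : 0 < Real.sqrt (π * T) := Real.sqrt_pos.mpr (by positivity)
  have harg : (π/T) * (π*T) = π^2 := by field_simp
  have hmul : Real.sqrt (π/T) * Real.sqrt (π*T) = π := by
    rw [← Real.sqrt_mul (by positivity) (π*T), harg, Real.sqrt_sq Real.pi_nonneg]
  have hfinal : (1/π) * Real.sqrt (π / T) = 1 / Real.sqrt (π * T) := by
    rw [show (1/π) * Real.sqrt (π/T) = Real.sqrt (π/T) / π by ring,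
      div_eq_div_iff Real.pi_ne_zero hs.ne', one_mul, hmul]
  rw [← hfinal]
  exact step1

end Gauss


end KMCSV

/-- **Baillon–Bruck conjecture / main theorem.**
For every `n ≥ 1`, the Krasnosel'skii–Mann iterates satisfy
`√(π · Σ_{i=1}^n α_i(1−α_i)) · ‖x_n − T x_n‖ ≤ diam C`; equivalently,
`‖x_n − T x_n‖ ≤ diam C / √(π Σ_{i=1}^n α_i(1−α_i))` whenever the sum is positive. -/
theorem km_asymptotic_regularity
    {X : Type*} [NormedAddCommGroup X] [NormedSpace ℝ X]
    (C : Set X) (hCne : C.Nonempty) (hCconv : Convex ℝ C)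
    (hCbdd : Bornology.IsBounded C)
    (T : X → X) (hTmaps : Set.MapsTo T C C)
    (hT : ∀ x ∈ C, ∀ y ∈ C, ‖T x - T y‖ ≤ ‖x - y‖)
    (α : ℕ → ℝ) (hα : ∀ k, α k ∈ Set.Icc (0:ℝ) 1)
    (x : ℕ → X) (hx0 : x 0 ∈ C)
    (hx : ∀ k, x (k + 1) = (1 - α (k + 1)) • x k + α (k + 1) • T (x k))
    (n : ℕ) (hn : 1 ≤ n) :
    Real.sqrt (Real.pi * ∑ i ∈ Finset.Icc 1 n, α i * (1 - α i)) * ‖x n - T (x n)‖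
      ≤ Metric.diam C ∧
    (0 < ∑ i ∈ Finset.Icc 1 n, α i * (1 - α i) →
      ‖x n - T (x n)‖
        ≤ Metric.diam C / Real.sqrt (Real.pi * ∑ i ∈ Finset.Icc 1 n, α i * (1 - α i))) := by
  have hSeq : ∑ i ∈ Finset.Icc 1 n, α i * (1 - α i)
      = ∑ i ∈ Finset.Icc 1 n, KMCSV.tau (α i) := Finset.sum_congr rfl (fun i _ => rfl)
  set S := ∑ i ∈ Finset.Icc 1 n, α i * (1 - α i) with hSdef
  have hkm := (KMCSV.km_key C hCconv hCbdd T hTmaps hT α hα x hx0 hx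
    (n + n) n n (by omega) le_rfl).1
  have hd0 : 0 ≤ Metric.diam C := Metric.diam_nonneg
  have hS0 : 0 ≤ S := by
    rw [hSeq]
    exact Finset.sum_nonneg (fun i _ => KMCSV.tau_nonneg (hα i))
  have main : ∀ _ : 0 < S, ‖x n - T (x n)‖
      ≤ Metric.diam C * (1 / Real.sqrt (Real.pi * S)) := by
    intro hpos
    have hQ := KMCSV.Qnn_le α hα n (by rw [← hSeq]; exact hpos)
    rw [← hSeq] at hQ
    exact le_trans hkm (mul_le_mul_of_nonneg_left hQ hd0)
  constructor
  · rcases eq_or_lt_of_le hS0 with h0 | hpos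
    · rw [← h0, mul_zero, Real.sqrt_zero, zero_mul]
      exact hd0
    · have hsq : 0 < Real.sqrt (Real.pi * S) :=
        Real.sqrt_pos.mpr (by positivity)
      have hc := main hpos
      have := mul_le_mul_of_nonneg_left hc hsq.le
      calc Real.sqrt (Real.pi * S) * ‖x n - T (x n)‖
          ≤ Real.sqrt (Real.pi * S) * (Metric.diam C * (1 / Real.sqrt (Real.pi * S))) := this
        _ = Metric.diam C := by field_simp
  · intro hpos
    rw [div_eq_mul_one_div]
    exact main hpos
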